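/- Let Z : Fin 4 × Fin 4 → ℝ, g₀,g₁,g₂,g₃ ∈ C([0,h₂],ℝ), f₀,f₁,f₂,f₃ ∈ C([0,h₁],ℝ). Define for k = 0,1,2,3: φ_k(x₂) = Σ_{j=0}^{3} (x₂^j / j!)·Z(k,j) + ∫_0^{x₂} ((x₂−τ)³/3!)·g_k(τ) dτ and ψ_k(x₁) = Σ_{i=0}^{3} ((x₁−h₁)^i / i!)·Z(i,k) + ∫_{h₁}^{x₁} ((x₁−λ)³/3!)·f_k(λ) dλ. Then for all k, m ∈ {0,1,2,3}: φ_k^{(m)}(0) = ψ_m^{(k)}(h₁). -/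

import Mathlib

open intervalIntegral Set

open MeasureTheory Filter Asymptotics in
private lemma abs_sub_le_of_mem_uIcc {u v τ : ℝ} (h : τ ∈ Set.uIcc u v) : |v - τ| ≤ |v - u| := by
  rw [Set.mem_uIcc] at h
  have h1 := le_abs_self (v - u)
  have h2 := neg_abs_le (v - u)
  rw [abs_le]
  constructor <;> rcases h with ⟨hu, hv⟩ | ⟨hu, hv⟩ <;> linarith

open MeasureTheory in
private lemma normInt_le (G : ℝ → ℝ) (hG : Integrable G) (u v : ℝ) :
    |∫ τ in u..v, ‖G τ‖| ≤ ∫ τ, ‖G τ‖ := by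
  rcases le_total u v with h | h
  · rw [abs_of_nonneg (intervalIntegral.integral_nonneg h fun τ _ => norm_nonneg _),
      intervalIntegral.integral_of_le h]
    exact setIntegral_le_integral hG.norm (Filter.Eventually.of_forall fun τ => norm_nonneg _)
  · rw [intervalIntegral.integral_symm, abs_neg,
      abs_of_nonneg (intervalIntegral.integral_nonneg h fun τ _ => norm_nonneg _),
      intervalIntegral.integral_of_le h]
    exact setIntegral_le_integral hG.norm (Filter.Eventually.of_forall fun τ => norm_nonneg _)

open MeasureTheory in
private lemma bound_mul (G : ℝ → ℝ) (hG : Integrable G) (f : ℝ → ℝ) {C : ℝ} (hC : 0 ≤ C)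
    (u v : ℝ) (h : ∀ τ ∈ Set.uIoc u v, |f τ| ≤ C) :
    ‖∫ τ in u..v, f τ * G τ‖ ≤ C * ∫ τ, ‖G τ‖ := by
  have hb : IntervalIntegrable (fun τ => C * ‖G τ‖) volume u v :=
    (hG.norm.intervalIntegrable).const_mul C
  have hae : ∀ᵐ t ∂(volume.restrict (Set.uIoc u v)), ‖f t * G t‖ ≤ C * ‖G t‖ := by
    refine (ae_restrict_iff' measurableSet_uIoc).mpr (Filter.Eventually.of_forall fun τ hτ => ?_)
    rw [norm_mul]
    exact mul_le_mul_of_nonneg_right (h τ hτ) (norm_nonneg _)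
  refine (intervalIntegral.norm_integral_le_abs_of_norm_le hae hb).trans ?_
  rw [intervalIntegral.integral_const_mul, abs_mul, abs_of_nonneg hC]
  exact mul_le_mul_of_nonneg_left (normInt_le G hG u v) hC

open MeasureTheory Filter Asymptotics in
private lemma hasDerivAt_int (G : ℝ → ℝ) (hG : Integrable G) (c x : ℝ)
    (K K' : ℝ → ℝ → ℝ) (hK : ∀ y, Continuous (K y)) (hK' : Continuous (K' x))
    {C₁ : ℝ} (hC₁ : 0 ≤ C₁)
    (hd : ∀ h τ, |h| ≤ 1 → τ ∈ Set.uIcc c x → |K (x + h) τ - K x τ - h * K' x τ| ≤ C₁ * h ^ 2)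
    (h2 : ∀ h τ, |h| ≤ 1 → τ ∈ Set.uIcc x (x + h) → |K (x + h) τ| ≤ h ^ 2) :
    HasDerivAt (fun y => ∫ τ in c..y, K y τ * G τ) (∫ τ in c..x, K' x τ * G τ) x := by
  rw [hasDerivAt_iff_isLittleO_nhds_zero]
  set M := ∫ τ, ‖G τ‖ with hMdef
  have hM0 : 0 ≤ M := integral_nonneg fun τ => norm_nonneg _
  have ii : ∀ (φ : ℝ → ℝ), Continuous φ → ∀ u v : ℝ,
      IntervalIntegrable (fun τ => φ τ * G τ) volume u v :=
    fun φ hφ u v => (hG.intervalIntegrable).continuousOn_mul hφ.continuousOn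
  have bigO : ∀ h : ℝ, |h| ≤ 1 →
      ‖(∫ τ in c..(x + h), K (x + h) τ * G τ) - (∫ τ in c..x, K x τ * G τ)
        - h • (∫ τ in c..x, K' x τ * G τ)‖ ≤ (C₁ + 1) * M * h ^ 2 := by
    intro h hh
    have split : (∫ τ in c..(x + h), K (x + h) τ * G τ)
        = (∫ τ in c..x, K (x + h) τ * G τ) + ∫ τ in x..(x + h), K (x + h) τ * G τ :=
      (intervalIntegral.integral_add_adjacent_intervals (ii _ (hK _) _ _) (ii _ (hK _) _ _)).symm
    have i3 : IntervalIntegrable (fun τ => h * (K' x τ * G τ)) volume c x :=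
      (ii _ hK' c x).const_mul h
    have comb : (∫ τ in c..x, K (x + h) τ * G τ) - (∫ τ in c..x, K x τ * G τ)
        - h * (∫ τ in c..x, K' x τ * G τ)
        = ∫ τ in c..x, (K (x + h) τ - K x τ - h * K' x τ) * G τ := by
      rw [← intervalIntegral.integral_const_mul,
        ← intervalIntegral.integral_sub (ii _ (hK _) c x) (ii _ (hK _) c x),
        ← intervalIntegral.integral_sub ((ii _ (hK _) c x).sub (ii _ (hK _) c x)) i3]
      apply intervalIntegral.integral_congr
      intro τ _
      ring
    have comb2 : (∫ τ in c..x, K (x + h) τ * G τ) + (∫ τ in x..(x + h), K (x + h) τ * G τ)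
        - (∫ τ in c..x, K x τ * G τ) - h * (∫ τ in c..x, K' x τ * G τ)
        = (∫ τ in c..x, (K (x + h) τ - K x τ - h * K' x τ) * G τ)
          + ∫ τ in x..(x + h), K (x + h) τ * G τ := by
      rw [← comb]; ring
    rw [smul_eq_mul, split, comb2]
    have b1 : ‖∫ τ in c..x, (K (x + h) τ - K x τ - h * K' x τ) * G τ‖ ≤ C₁ * h ^ 2 * M :=
      bound_mul G hG _ (mul_nonneg hC₁ (sq_nonneg h)) c x
        (fun τ hτ => hd h τ hh (Set.uIoc_subset_uIcc hτ))
    have b2 : ‖∫ τ in x..(x + h), K (x + h) τ * G τ‖ ≤ h ^ 2 * M :=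
      bound_mul G hG _ (sq_nonneg h) x (x + h)
        (fun τ hτ => h2 h τ hh (Set.uIoc_subset_uIcc hτ))
    calc ‖(∫ τ in c..x, (K (x + h) τ - K x τ - h * K' x τ) * G τ)
          + ∫ τ in x..(x + h), K (x + h) τ * G τ‖
        ≤ ‖∫ τ in c..x, (K (x + h) τ - K x τ - h * K' x τ) * G τ‖
          + ‖∫ τ in x..(x + h), K (x + h) τ * G τ‖ := norm_add_le _ _
      _ ≤ C₁ * h ^ 2 * M + h ^ 2 * M := add_le_add b1 b2
      _ = (C₁ + 1) * M * h ^ 2 := by ring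
  have ev1 : ∀ᶠ h : ℝ in nhds 0, |h| ≤ 1 := by
    filter_upwards [eventually_abs_sub_lt (0 : ℝ) one_pos] with h hh
    rw [sub_zero] at hh
    exact hh.le
  have hO : (fun h : ℝ => (∫ τ in c..(x + h), K (x + h) τ * G τ)
      - (∫ τ in c..x, K x τ * G τ) - h • (∫ τ in c..x, K' x τ * G τ))
      =O[nhds 0] fun h => h ^ 2 := by
    rw [Asymptotics.isBigO_iff]
    refine ⟨(C₁ + 1) * M, ?_⟩
    filter_upwards [ev1] with h hh
    have : ‖h ^ 2‖ = h ^ 2 := by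
      rw [Real.norm_eq_abs, abs_of_nonneg (sq_nonneg h)]
    rw [this]
    exact bigO h hh
  have hsq : (fun h : ℝ => h ^ 2) =o[nhds 0] fun h => h := by
    rw [Asymptotics.isLittleO_iff]
    intro ε hε
    filter_upwards [eventually_abs_sub_lt (0 : ℝ) hε] with h hh
    rw [sub_zero] at hh
    have h1 : ‖h ^ 2‖ = |h| * |h| := by rw [Real.norm_eq_abs, pow_two, abs_mul]
    rw [h1, Real.norm_eq_abs]
    exact mul_le_mul_of_nonneg_right hh.le (abs_nonneg _)
  exact hO.trans_isLittleO hsq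

open MeasureTheory in
private lemma D3 (G : ℝ → ℝ) (hG : Integrable G) (c x : ℝ) :
    HasDerivAt (fun y => ∫ τ in c..y, (y - τ) ^ 3 / 6 * G τ)
      (∫ τ in c..x, (x - τ) ^ 2 / 2 * G τ) x := by
  refine hasDerivAt_int G hG c x (fun y τ => (y - τ) ^ 3 / 6) (fun y τ => (y - τ) ^ 2 / 2)
    (fun y => by fun_prop) (by fun_prop) (C₁ := (3 * |x - c| + 1) / 6) (by positivity) ?_ ?_
  · intro h τ hh hτ
    have h1 : |x - τ| ≤ |x - c| := abs_sub_le_of_mem_uIcc hτ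
    have key : (x + h - τ) ^ 3 / 6 - (x - τ) ^ 3 / 6 - h * ((x - τ) ^ 2 / 2)
        = h ^ 2 * (3 * (x - τ) + h) / 6 := by ring
    rw [key]
    have h3 : |3 * (x - τ) + h| ≤ 3 * |x - c| + 1 := by
      calc |3 * (x - τ) + h| ≤ |3 * (x - τ)| + |h| := abs_add_le _ _
        _ = 3 * |x - τ| + |h| := by rw [abs_mul]; norm_num
        _ ≤ 3 * |x - c| + 1 := by linarith
    calc |h ^ 2 * (3 * (x - τ) + h) / 6| = h ^ 2 * |3 * (x - τ) + h| / 6 := by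
          rw [abs_div, abs_mul, abs_of_nonneg (sq_nonneg h)]
          norm_num
      _ ≤ h ^ 2 * (3 * |x - c| + 1) / 6 := by
          have := sq_nonneg h
          gcongr
      _ = (3 * |x - c| + 1) / 6 * h ^ 2 := by ring
  · intro h τ hh hτ
    have h1 : |x + h - τ| ≤ |h| := by
      have := abs_sub_le_of_mem_uIcc (u := x) (v := x + h) hτ
      simpa using this
    have h2 : |h| ^ 3 ≤ |h| ^ 2 := pow_le_pow_of_le_one (abs_nonneg _) hh (by norm_num)
    calc |(x + h - τ) ^ 3 / 6| = |x + h - τ| ^ 3 / 6 := by rw [abs_div, abs_pow]; norm_num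
      _ ≤ |h| ^ 3 / 6 := by gcongr
      _ ≤ |h| ^ 2 := by nlinarith [pow_nonneg (abs_nonneg h) 3]
      _ = h ^ 2 := sq_abs h

open MeasureTheory in
private lemma D2 (G : ℝ → ℝ) (hG : Integrable G) (c x : ℝ) :
    HasDerivAt (fun y => ∫ τ in c..y, (y - τ) ^ 2 / 2 * G τ)
      (∫ τ in c..x, (x - τ) * G τ) x := by
  refine hasDerivAt_int G hG c x (fun y τ => (y - τ) ^ 2 / 2) (fun y τ => y - τ)
    (fun y => by fun_prop) (by fun_prop) (C₁ := 1) (by norm_num) ?_ ?_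
  · intro h τ hh hτ
    have key : (x + h - τ) ^ 2 / 2 - (x - τ) ^ 2 / 2 - h * (x - τ) = h ^ 2 / 2 := by ring
    rw [key, abs_div, abs_of_nonneg (sq_nonneg h)]
    rw [show |(2 : ℝ)| = 2 by norm_num]
    nlinarith [sq_nonneg h]
  · intro h τ hh hτ
    have h1 : |x + h - τ| ≤ |h| := by
      have := abs_sub_le_of_mem_uIcc (u := x) (v := x + h) hτ
      simpa using this
    calc |(x + h - τ) ^ 2 / 2| = |x + h - τ| ^ 2 / 2 := by rw [abs_div, abs_pow]; norm_num
      _ ≤ |h| ^ 2 / 2 := by gcongr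
      _ ≤ h ^ 2 := by rw [sq_abs]; nlinarith [sq_nonneg h]

open MeasureTheory Filter in
private lemma D1 (G : ℝ → ℝ) (hG : Integrable G) (c : ℝ) :
    HasDerivAt (fun y => ∫ τ in c..y, (y - τ) * G τ) 0 c := by
  rw [hasDerivAt_iff_isLittleO_nhds_zero, Asymptotics.isLittleO_iff]
  intro ε hε
  have hN : Continuous fun y => ∫ τ in c..y, ‖G τ‖ := hG.norm.continuous_primitive c
  have ht : Tendsto (fun h : ℝ => ∫ τ in c..(c + h), ‖G τ‖) (nhds 0) (nhds 0) := by
    have hcomp : Tendsto (fun h : ℝ => c + h) (nhds 0) (nhds (c + 0)) :=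
      tendsto_const_nhds.add tendsto_id
    have := (hN.tendsto (c + 0)).comp hcomp
    simpa [Function.comp_def] using this
  have hev : ∀ᶠ h : ℝ in nhds 0, |∫ τ in c..(c + h), ‖G τ‖| < ε := by
    have := ht.eventually (eventually_abs_sub_lt (0 : ℝ) hε)
    simpa using this
  filter_upwards [hev] with h hh
  simp only [intervalIntegral.integral_same, smul_zero, sub_zero]
  have hb : ‖∫ τ in c..(c + h), (c + h - τ) * G τ‖ ≤ |h| * |∫ τ in c..(c + h), ‖G τ‖| := by
    have hae : ∀ᵐ t ∂(volume.restrict (Set.uIoc c (c + h))),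
        ‖(c + h - t) * G t‖ ≤ |h| * ‖G t‖ := by
      refine (ae_restrict_iff' measurableSet_uIoc).mpr (Eventually.of_forall fun τ hτ => ?_)
      rw [norm_mul]
      have h1 : |c + h - τ| ≤ |h| := by
        have := abs_sub_le_of_mem_uIcc (u := c) (v := c + h) (Set.uIoc_subset_uIcc hτ)
        simpa using this
      exact mul_le_mul_of_nonneg_right h1 (norm_nonneg _)
    refine (intervalIntegral.norm_integral_le_abs_of_norm_le hae
      ((hG.norm.intervalIntegrable).const_mul _)).trans ?_
    rw [intervalIntegral.integral_const_mul, abs_mul, abs_abs]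
  calc ‖∫ τ in c..(c + h), (c + h - τ) * G τ‖
      ≤ |h| * |∫ τ in c..(c + h), ‖G τ‖| := hb
    _ ≤ |h| * ε := mul_le_mul_of_nonneg_left hh.le (abs_nonneg _)
    _ = ε * ‖h‖ := by rw [Real.norm_eq_abs]; ring

private lemma iteratedDeriv_congr_nhds {f g : ℝ → ℝ} {c : ℝ} (n : ℕ) (h : f =ᶠ[nhds c] g) :
    iteratedDeriv n f c = iteratedDeriv n g c := by
  have H : ∀ n : ℕ, iteratedDeriv n f =ᶠ[nhds c] iteratedDeriv n g := by
    intro n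
    induction n with
    | zero => simpa [iteratedDeriv_zero] using h
    | succ n ih =>
        simp only [iteratedDeriv_succ]
        exact ih.deriv
  exact (H n).self_of_nhds

private lemma poly3_deriv (c x z0 z1 z2 z3 : ℝ) :
    HasDerivAt (fun y => z0 + (y - c) * z1 + (y - c) ^ 2 / 2 * z2 + (y - c) ^ 3 / 6 * z3)
      (z1 + (x - c) * z2 + (x - c) ^ 2 / 2 * z3) x := by
  have hid : HasDerivAt (fun y : ℝ => y - c) 1 x := (hasDerivAt_id x).sub_const c
  have H := (((hasDerivAt_const x z0).add (hid.mul_const z1)).add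
      (((hid.pow 2).div_const 2).mul_const z2)).add (((hid.pow 3).div_const 6).mul_const z3)
  refine H.congr_deriv ?_
  push_cast
  ring

private lemma poly3b_deriv (c x z1 z2 z3 : ℝ) :
    HasDerivAt (fun y => z1 + (y - c) * z2 + (y - c) ^ 2 / 2 * z3) (z2 + (x - c) * z3) x := by
  have hid : HasDerivAt (fun y : ℝ => y - c) 1 x := (hasDerivAt_id x).sub_const c
  have H := ((hasDerivAt_const x z1).add (hid.mul_const z2)).add
      (((hid.pow 2).div_const 2).mul_const z3)
  refine H.congr_deriv ?_
  push_cast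
  ring

private lemma poly2_deriv (c x z2 z3 : ℝ) :
    HasDerivAt (fun y => z2 + (y - c) * z3) z3 x := by
  have hid : HasDerivAt (fun y : ℝ => y - c) 1 x := (hasDerivAt_id x).sub_const c
  have H := (hasDerivAt_const x z2).add (hid.mul_const z3)
  refine H.congr_deriv ?_
  ring

open MeasureTheory Filter in
private lemma key_lemma (c : ℝ) (Zc : Fin 4 → ℝ) (F G : ℝ → ℝ) (hG : Integrable G)
    (hF : ∀ᶠ x in nhds c, F x
      = (Zc 0 + (x - c) * Zc 1 + (x - c) ^ 2 / 2 * Zc 2 + (x - c) ^ 3 / 6 * Zc 3)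
        + ∫ τ in c..x, (x - τ) ^ 3 / 6 * G τ) :
    ∀ m : Fin 4, iteratedDeriv (m : ℕ) F c = Zc m := by
  set F0 : ℝ → ℝ := fun x =>
    (Zc 0 + (x - c) * Zc 1 + (x - c) ^ 2 / 2 * Zc 2 + (x - c) ^ 3 / 6 * Zc 3)
      + ∫ τ in c..x, (x - τ) ^ 3 / 6 * G τ with hF0def
  set F1 : ℝ → ℝ := fun x =>
    (Zc 1 + (x - c) * Zc 2 + (x - c) ^ 2 / 2 * Zc 3) + ∫ τ in c..x, (x - τ) ^ 2 / 2 * G τ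
    with hF1def
  set F2 : ℝ → ℝ := fun x => (Zc 2 + (x - c) * Zc 3) + ∫ τ in c..x, (x - τ) * G τ with hF2def
  have hEq : F =ᶠ[nhds c] F0 := hF
  have hd0 : ∀ x, HasDerivAt F0 (F1 x) x := fun x =>
    (poly3_deriv c x (Zc 0) (Zc 1) (Zc 2) (Zc 3)).add (D3 G hG c x)
  have hd1 : ∀ x, HasDerivAt F1 (F2 x) x := fun x =>
    (poly3b_deriv c x (Zc 1) (Zc 2) (Zc 3)).add (D2 G hG c x)
  have hd2 : HasDerivAt F2 (Zc 3) c := by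
    have := (poly2_deriv c c (Zc 2) (Zc 3)).add (D1 G hG c)
    exact this.congr_deriv (add_zero _)
  have e0 : deriv F0 = F1 := funext fun x => (hd0 x).deriv
  have e1 : deriv F1 = F2 := funext fun x => (hd1 x).deriv
  intro m
  fin_cases m
  · rw [iteratedDeriv_congr_nhds _ hEq]
    show iteratedDeriv 0 F0 c = Zc 0
    rw [iteratedDeriv_zero, hF0def]
    simp
  · rw [iteratedDeriv_congr_nhds _ hEq]
    show iteratedDeriv 1 F0 c = Zc 1
    rw [iteratedDeriv_one, e0, hF1def]
    simp
  · rw [iteratedDeriv_congr_nhds _ hEq]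
    show iteratedDeriv 2 F0 c = Zc 2
    rw [show (2 : ℕ) = 1 + 1 from rfl, iteratedDeriv_succ, iteratedDeriv_one, e0, e1, hF2def]
    simp
  · rw [iteratedDeriv_congr_nhds _ hEq]
    show iteratedDeriv (2 + 1) F0 c = Zc 3
    rw [iteratedDeriv_succ]
    show deriv (iteratedDeriv (1 + 1) F0) c = Zc 3
    rw [iteratedDeriv_succ, iteratedDeriv_one, e0, e1, hd2.deriv]

open MeasureTheory Filter in
private lemma reduceL (c d : ℝ) (hcd : c < d) (g : ℝ → ℝ)
    (hg : IntervalIntegrable g volume c d) :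
    ∃ G : ℝ → ℝ, Integrable G ∧
      ∀ᶠ x in nhds c, (∫ τ in c..x, (x - τ) ^ 3 / 6 * g τ)
        = ∫ τ in c..x, (x - τ) ^ 3 / 6 * G τ := by
  by_cases hA : ∃ a, a < c ∧ IntervalIntegrable g volume a c
  · obtain ⟨a, hac, hi⟩ := hA
    refine ⟨(Set.Icc a d).indicator g, ?_, ?_⟩
    · rw [integrable_indicator_iff measurableSet_Icc]
      have h1 : IntegrableOn g (Set.Icc a c) :=
        (intervalIntegrable_iff_integrableOn_Icc_of_le hac.le).mp hi
      have h2 : IntegrableOn g (Set.Icc c d) :=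
        (intervalIntegrable_iff_integrableOn_Icc_of_le hcd.le).mp hg
      refine (h1.union h2).mono_set fun τ hτ => ?_
      rcases le_total τ c with h | h
      exacts [Or.inl ⟨hτ.1, h⟩, Or.inr ⟨h, hτ.2⟩]
    · filter_upwards [isOpen_Ioo.mem_nhds (show c ∈ Set.Ioo a d from ⟨hac, hcd⟩)] with x hx
      apply intervalIntegral.integral_congr
      intro τ hτ
      have had : a ≤ d := hac.le.trans hcd.le
      have hm1 : c ∈ Set.uIcc a d := by
        rw [Set.uIcc_of_le had]; exact ⟨hac.le, hcd.le⟩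
      have hm2 : x ∈ Set.uIcc a d := by
        rw [Set.uIcc_of_le had]; exact ⟨hx.1.le, hx.2.le⟩
      have hτ' : τ ∈ Set.Icc a d := by
        rw [← Set.uIcc_of_le had]
        exact Set.uIcc_subset_uIcc hm1 hm2 hτ
      simp only [Set.indicator_of_mem hτ']
  · push_neg at hA
    refine ⟨(Set.Ioc c d).indicator g, ?_, ?_⟩
    · rw [integrable_indicator_iff measurableSet_Ioc]
      exact hg.1
    · filter_upwards [isOpen_Ioo.mem_nhds
        (show c ∈ Set.Ioo (c - 1) d from ⟨by linarith, hcd⟩)] with x hx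
      rcases le_or_gt c x with hcx | hxc
      · rw [intervalIntegral.integral_of_le hcx, intervalIntegral.integral_of_le hcx]
        apply setIntegral_congr_fun measurableSet_Ioc
        intro τ hτ
        have : τ ∈ Set.Ioc c d := ⟨hτ.1, hτ.2.trans hx.2.le⟩
        simp only [Set.indicator_of_mem this]
      · have hR : (∫ τ in c..x, (x - τ) ^ 3 / 6 * (Set.Ioc c d).indicator g τ) = 0 := by
          rw [intervalIntegral.integral_of_ge hxc.le]
          have hzero : ∀ τ ∈ Set.Ioc x c,
              (x - τ) ^ 3 / 6 * (Set.Ioc c d).indicator g τ = 0 := by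
            intro τ hτ
            rw [Set.indicator_of_notMem (fun hmem => absurd hτ.2 (not_le.mpr hmem.1)), mul_zero]
          rw [setIntegral_congr_fun measurableSet_Ioc hzero]
          simp
        rw [hR]
        apply intervalIntegral.integral_undef
        intro H
        set m := (x + c) / 2 with hmdef
        have hxm : x < m := by rw [hmdef]; linarith
        have hmc : m < c := by rw [hmdef]; linarith
        have hmem1 : m ∈ Set.uIcc x c := by
          rw [Set.uIcc_of_le hxc.le]; exact ⟨hxm.le, hmc.le⟩
        have hmem2 : c ∈ Set.uIcc x c := by
          rw [Set.uIcc_of_le hxc.le]; exact ⟨hxc.le, le_refl c⟩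
        have H1 : IntervalIntegrable (fun τ => (x - τ) ^ 3 / 6 * g τ) volume m c :=
          H.symm.mono_set (Set.uIcc_subset_uIcc hmem1 hmem2)
        have hcont : ContinuousOn (fun τ : ℝ => 6 / (x - τ) ^ 3) (Set.uIcc m c) := by
          apply ContinuousOn.div continuousOn_const (by fun_prop)
          intro τ hτ
          rw [Set.uIcc_of_le hmc.le] at hτ
          have hlt : x - τ < 0 := by linarith [hτ.1]
          exact pow_ne_zero 3 (ne_of_lt hlt)
        have H2 := H1.mul_continuousOn hcont
        have H3 : IntervalIntegrable g volume m c := by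
          have heq : Set.EqOn (fun τ => (x - τ) ^ 3 / 6 * g τ * (6 / (x - τ) ^ 3)) g
              (Set.Icc m c) := by
            intro τ hτ
            have hne : x - τ ≠ 0 := ne_of_lt (by linarith [hτ.1])
            field_simp
          rw [intervalIntegrable_iff_integrableOn_Icc_of_le hmc.le] at H2 ⊢
          exact H2.congr_fun heq measurableSet_Icc
        exact hA m hmc H3

open MeasureTheory Filter in
private lemma reduceR (c d : ℝ) (hdc : d < c) (g : ℝ → ℝ)
    (hg : IntervalIntegrable g volume d c) :
    ∃ G : ℝ → ℝ, Integrable G ∧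
      ∀ᶠ x in nhds c, (∫ τ in c..x, (x - τ) ^ 3 / 6 * g τ)
        = ∫ τ in c..x, (x - τ) ^ 3 / 6 * G τ := by
  by_cases hA : ∃ b, c < b ∧ IntervalIntegrable g volume c b
  · obtain ⟨b, hcb, hi⟩ := hA
    refine ⟨(Set.Icc d b).indicator g, ?_, ?_⟩
    · rw [integrable_indicator_iff measurableSet_Icc]
      have h1 : IntegrableOn g (Set.Icc d c) :=
        (intervalIntegrable_iff_integrableOn_Icc_of_le hdc.le).mp hg
      have h2 : IntegrableOn g (Set.Icc c b) :=
        (intervalIntegrable_iff_integrableOn_Icc_of_le hcb.le).mp hi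
      refine (h1.union h2).mono_set fun τ hτ => ?_
      rcases le_total τ c with h | h
      exacts [Or.inl ⟨hτ.1, h⟩, Or.inr ⟨h, hτ.2⟩]
    · filter_upwards [isOpen_Ioo.mem_nhds (show c ∈ Set.Ioo d b from ⟨hdc, hcb⟩)] with x hx
      apply intervalIntegral.integral_congr
      intro τ hτ
      have hdb : d ≤ b := hdc.le.trans hcb.le
      have hm1 : c ∈ Set.uIcc d b := by
        rw [Set.uIcc_of_le hdb]; exact ⟨hdc.le, hcb.le⟩
      have hm2 : x ∈ Set.uIcc d b := by
        rw [Set.uIcc_of_le hdb]; exact ⟨hx.1.le, hx.2.le⟩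
      have hτ' : τ ∈ Set.Icc d b := by
        rw [← Set.uIcc_of_le hdb]
        exact Set.uIcc_subset_uIcc hm1 hm2 hτ
      simp only [Set.indicator_of_mem hτ']
  · push_neg at hA
    refine ⟨(Set.Ico d c).indicator g, ?_, ?_⟩
    · rw [integrable_indicator_iff measurableSet_Ico]
      rw [integrableOn_Ico_iff_integrableOn_Ioo]
      exact (integrableOn_Ioc_iff_integrableOn_Ioo).mp hg.1
    · filter_upwards [isOpen_Ioo.mem_nhds
        (show c ∈ Set.Ioo d (c + 1) from ⟨hdc, by linarith⟩)] with x hx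
      rcases le_or_gt x c with hxc | hcx
      · rw [intervalIntegral.integral_of_ge hxc, intervalIntegral.integral_of_ge hxc,
          integral_Ioc_eq_integral_Ioo, integral_Ioc_eq_integral_Ioo]
        congr 1
        apply setIntegral_congr_fun measurableSet_Ioo
        intro τ hτ
        have : τ ∈ Set.Ico d c := ⟨hx.1.le.trans hτ.1.le, hτ.2⟩
        simp only [Set.indicator_of_mem this]
      · have hR : (∫ τ in c..x, (x - τ) ^ 3 / 6 * (Set.Ico d c).indicator g τ) = 0 := by
          rw [intervalIntegral.integral_of_le hcx.le]
          have hzero : ∀ τ ∈ Set.Ioc c x,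
              (x - τ) ^ 3 / 6 * (Set.Ico d c).indicator g τ = 0 := by
            intro τ hτ
            rw [Set.indicator_of_notMem (fun hmem => absurd hτ.1 (not_lt.mpr hmem.2.le)), mul_zero]
          rw [setIntegral_congr_fun measurableSet_Ioc hzero]
          simp
        rw [hR]
        apply intervalIntegral.integral_undef
        intro H
        set m := (x + c) / 2 with hmdef
        have hcm : c < m := by rw [hmdef]; linarith
        have hmx : m < x := by rw [hmdef]; linarith
        have hmem1 : c ∈ Set.uIcc c x := by
          rw [Set.uIcc_of_le hcx.le]; exact ⟨le_refl c, hcx.le⟩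
        have hmem2 : m ∈ Set.uIcc c x := by
          rw [Set.uIcc_of_le hcx.le]; exact ⟨hcm.le, hmx.le⟩
        have H1 : IntervalIntegrable (fun τ => (x - τ) ^ 3 / 6 * g τ) volume c m :=
          H.mono_set (Set.uIcc_subset_uIcc hmem1 hmem2)
        have hcont : ContinuousOn (fun τ : ℝ => 6 / (x - τ) ^ 3) (Set.uIcc c m) := by
          apply ContinuousOn.div continuousOn_const (by fun_prop)
          intro τ hτ
          rw [Set.uIcc_of_le hcm.le] at hτ
          have hlt : 0 < x - τ := by linarith [hτ.2]
          exact pow_ne_zero 3 (ne_of_gt hlt)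
        have H2 := H1.mul_continuousOn hcont
        have H3 : IntervalIntegrable g volume c m := by
          have heq : Set.EqOn (fun τ => (x - τ) ^ 3 / 6 * g τ * (6 / (x - τ) ^ 3)) g
              (Set.Icc c m) := by
            intro τ hτ
            have hne : x - τ ≠ 0 := ne_of_gt (by linarith [hτ.2])
            field_simp
          rw [intervalIntegrable_iff_integrableOn_Icc_of_le hcm.le] at H2 ⊢
          exact H2.congr_fun heq measurableSet_Icc
        exact hA m hcm H3

theorem stmt_4 (h₁ h₂ : ℝ) (hh₁ : 0 < h₁) (hh₂ : 0 < h₂)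
    (Z : Fin 4 × Fin 4 → ℝ) (g f : Fin 4 → ℝ → ℝ)
    (hg : ∀ k, ContinuousOn (g k) (Icc 0 h₂))
    (hf : ∀ k, ContinuousOn (f k) (Icc 0 h₁))
    (φ ψ : Fin 4 → ℝ → ℝ)
    (hφ : ∀ k x₂, φ k x₂ = (∑ j : Fin 4, x₂ ^ (j : ℕ) / (Nat.factorial j : ℝ) * Z (k, j))
      + ∫ τ in (0:ℝ)..x₂, (x₂ - τ) ^ 3 / 6 * g k τ)
    (hψ : ∀ k x₁, ψ k x₁ = (∑ i : Fin 4, (x₁ - h₁) ^ (i : ℕ) / (Nat.factorial i : ℝ) * Z (i, k))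
      + ∫ l in h₁..x₁, (x₁ - l) ^ 3 / 6 * f k l) :
    ∀ k m : Fin 4, iteratedDeriv (m : ℕ) (φ k) 0 = iteratedDeriv (k : ℕ) (ψ m) h₁ := by
  intro k m
  have hgi : IntervalIntegrable (g k) MeasureTheory.volume 0 h₂ := by
    apply ContinuousOn.intervalIntegrable
    rw [Set.uIcc_of_le hh₂.le]
    exact hg k
  have hfi : IntervalIntegrable (f m) MeasureTheory.volume 0 h₁ := by
    apply ContinuousOn.intervalIntegrable
    rw [Set.uIcc_of_le hh₁.le]
    exact hf m
  have hφk : iteratedDeriv (m : ℕ) (φ k) 0 = Z (k, m) := by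
    obtain ⟨G, hGi, hGe⟩ := reduceL 0 h₂ hh₂ (g k) hgi
    refine key_lemma 0 (fun j => Z (k, j)) (φ k) G hGi ?_ m
    filter_upwards [hGe] with x hx
    rw [hφ k x, hx]
    congr 1
    rw [Fin.sum_univ_four]
    rw [show ((0 : Fin 4) : ℕ) = 0 from rfl, show ((1 : Fin 4) : ℕ) = 1 from rfl,
      show ((2 : Fin 4) : ℕ) = 2 from rfl, show ((3 : Fin 4) : ℕ) = 3 from rfl]
    norm_num [Nat.factorial]
  have hψm : iteratedDeriv (k : ℕ) (ψ m) h₁ = Z (k, m) := by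
    obtain ⟨G, hGi, hGe⟩ := reduceR h₁ 0 hh₁ (f m) hfi
    refine key_lemma h₁ (fun i => Z (i, m)) (ψ m) G hGi ?_ k
    filter_upwards [hGe] with x hx
    rw [hψ m x, hx]
    congr 1
    rw [Fin.sum_univ_four]
    rw [show ((0 : Fin 4) : ℕ) = 0 from rfl, show ((1 : Fin 4) : ℕ) = 1 from rfl,
      show ((2 : Fin 4) : ℕ) = 2 from rfl, show ((3 : Fin 4) : ℕ) = 3 from rfl]
    norm_num [Nat.factorial]
  rw [hφk, hψm]
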